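/- Let μ, r ∈ ℂ with r ∉ ℤ and r − μ ∉ ℤ. Then the sl(2)-module U_{μ,r} is irreducible: the only subspaces of U_{μ,r} invariant under all three operators e, h, f are the zero subspace and U_{μ,r} itself. -/

import Mathlib

/-! The sl(2)-module `U_{μ,r}`: underlying space `ℤ →₀ ℂ` with basis `E i = single i 1`. -/

/-- `e·E_i = E_{i−1}`. -/
noncomputable def eU : Module.End ℂ (ℤ →₀ ℂ) :=
  Finsupp.lift (ℤ →₀ ℂ) ℂ ℤ fun i => Finsupp.single (i - 1) 1

/-- `h·E_i = −(2r+2i−μ)·E_i`. -/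
noncomputable def hU (μ r : ℂ) : Module.End ℂ (ℤ →₀ ℂ) :=
  Finsupp.lift (ℤ →₀ ℂ) ℂ ℤ fun i =>
    (-(2 * r + 2 * (i : ℂ) - μ)) • Finsupp.single i 1

/-- `f·E_i = −(r+i+1)(r+i−μ)·E_{i+1}`. -/
noncomputable def fU (μ r : ℂ) : Module.End ℂ (ℤ →₀ ℂ) :=
  Finsupp.lift (ℤ →₀ ℂ) ℂ ℤ fun i =>
    (-((r + (i : ℂ) + 1) * (r + (i : ℂ) - μ))) • Finsupp.single (i + 1) 1

lemma eU_single (i : ℤ) (c : ℂ) : eU (Finsupp.single i c) = Finsupp.single (i - 1) c := by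
  rw [eU, Finsupp.lift_apply, Finsupp.sum_single_index (by rw [zero_smul]),
    Finsupp.smul_single, smul_eq_mul, mul_one]

lemma hU_single (μ r : ℂ) (i : ℤ) (c : ℂ) :
    hU μ r (Finsupp.single i c) = Finsupp.single i ((-(2 * r + 2 * (i : ℂ) - μ)) * c) := by
  rw [hU, Finsupp.lift_apply, Finsupp.sum_single_index (by rw [zero_smul]),
    smul_smul, Finsupp.smul_single, smul_eq_mul, mul_one, mul_comm]

lemma fU_single (μ r : ℂ) (i : ℤ) (c : ℂ) :
    fU μ r (Finsupp.single i c) =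
      Finsupp.single (i + 1) ((-((r + (i : ℂ) + 1) * (r + (i : ℂ) - μ))) * c) := by
  rw [fU, Finsupp.lift_apply, Finsupp.sum_single_index (by rw [zero_smul]),
    smul_smul, Finsupp.smul_single, smul_eq_mul, mul_one, mul_comm]

lemma hU_apply (μ r : ℂ) (v : ℤ →₀ ℂ) (j : ℤ) :
    (hU μ r v) j = (-(2 * r + 2 * (j : ℂ) - μ)) * v j := by
  induction v using Finsupp.induction_linear with
  | zero => rw [map_zero]; simp
  | add a b ha hb => rw [map_add, Finsupp.add_apply, ha, hb, Finsupp.add_apply, mul_add]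
  | single i c =>
      rw [hU_single]
      rcases eq_or_ne i j with rfl | h
      · rw [Finsupp.single_eq_same, Finsupp.single_eq_same]
      · rw [Finsupp.single_eq_of_ne' h, Finsupp.single_eq_of_ne' h, mul_zero]

lemma exists_single_mem (μ r : ℂ) (p : Submodule ℂ (ℤ →₀ ℂ))
    (hph : ∀ v ∈ p, hU μ r v ∈ p) :
    ∀ n : ℕ, ∀ v : ℤ →₀ ℂ, v.support.card ≤ n → v ∈ p → v ≠ 0 →
      ∃ i, Finsupp.single i 1 ∈ p := by
  intro n
  induction n with
  | zero =>
      intro v hc hv hne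
      exact absurd (Finsupp.support_eq_empty.mp (Finset.card_eq_zero.mp (Nat.le_zero.mp hc)))
        hne
  | succ n ih =>
      intro v hc hv hne
      obtain ⟨j, hj⟩ := Finsupp.support_nonempty_iff.mpr hne
      set lam : ℤ → ℂ := fun i => -(2 * r + 2 * (i : ℂ) - μ) with hlam
      set w : ℤ →₀ ℂ := hU μ r v - (lam j) • v with hw
      have hwp : w ∈ p := p.sub_mem (hph v hv) (p.smul_mem _ hv)
      have hwap : ∀ x : ℤ, w x = (lam x - lam j) * v x := by
        intro x
        rw [hw, Finsupp.sub_apply, Finsupp.smul_apply, hU_apply, smul_eq_mul, sub_mul]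
      rcases eq_or_ne w 0 with hw0 | hw0
      · -- then v is supported only at j, i.e. v = single j (v j)
        have hsupp : v.support = {j} := by
          apply Finset.eq_singleton_iff_unique_mem.mpr
          refine ⟨hj, fun x hx => ?_⟩
          by_contra hxj
          have : w x = 0 := by rw [hw0]; rfl
          rw [hwap] at this
          rcases mul_eq_zero.mp this with h1 | h2
          · have : lam x - lam j = 2 * ((j : ℂ) - (x : ℂ)) := by rw [hlam]; ring
            rw [this] at h1
            have : (j : ℂ) = (x : ℂ) := by
              have := mul_eq_zero.mp h1
              rcases this with h | h
              · norm_num at h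
              · linear_combination h
            exact hxj (Int.cast_injective this).symm
          · exact (Finsupp.mem_support_iff.mp hx) h2
        have hvj : v j ≠ 0 := Finsupp.mem_support_iff.mp hj
        have hveq : v = Finsupp.single j (v j) := by
          ext x
          rcases eq_or_ne x j with rfl | hxj
          · rw [Finsupp.single_eq_same]
          · rw [Finsupp.single_eq_of_ne' (Ne.symm hxj)]
            by_contra hx
            have : x ∈ v.support := Finsupp.mem_support_iff.mpr hx
            rw [hsupp, Finset.mem_singleton] at this
            exact hxj this
        refine ⟨j, ?_⟩
        have : (v j)⁻¹ • v ∈ p := p.smul_mem _ hv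
        rw [hveq] at this
        rw [Finsupp.smul_single, smul_eq_mul, Finsupp.single_eq_same,
          inv_mul_cancel₀ hvj] at this
        exact this
      · -- w has strictly smaller support
        have hsub : w.support ⊆ v.support.erase j := by
          intro x hx
          have hwx := Finsupp.mem_support_iff.mp hx
          rw [hwap] at hwx
          have hvx : v x ≠ 0 := fun h => hwx (by rw [h, mul_zero])
          have hxj : x ≠ j := by
            rintro rfl
            exact hwx (by rw [sub_self, zero_mul])
          exact Finset.mem_erase.mpr ⟨hxj, Finsupp.mem_support_iff.mpr hvx⟩
        have hcard : w.support.card ≤ n := by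
          have h1 := Finset.card_le_card hsub
          have h2 : (v.support.erase j).card = v.support.card - 1 :=
            Finset.card_erase_of_mem hj
          omega
        exact ih w hcard hwp hw0


/-- For `r ∉ ℤ` and `r − μ ∉ ℤ`, the sl(2)-module `U_{μ,r}` is irreducible: its only
subspaces invariant under all of `e, h, f` are `⊥` and `⊤`. -/
theorem U_irreducible (μ r : ℂ) (hr : ∀ n : ℤ, r ≠ (n : ℂ))
    (hrμ : ∀ n : ℤ, r - μ ≠ (n : ℂ)) :
    ∀ p : Submodule ℂ (ℤ →₀ ℂ),
      (∀ v ∈ p, eU v ∈ p) →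
      (∀ v ∈ p, hU μ r v ∈ p) →
      (∀ v ∈ p, fU μ r v ∈ p) →
      p = ⊥ ∨ p = ⊤ := by
  intro p hpe hph hpf
  rcases eq_or_ne p ⊥ with h | h
  · exact Or.inl h
  right
  -- get some basis vector in p
  obtain ⟨v, hv, hvne⟩ := Submodule.exists_mem_ne_zero_of_ne_bot h
  obtain ⟨i₀, hi₀⟩ := exists_single_mem μ r p hph v.support.card v le_rfl hv hvne
  -- step down
  have hdown : ∀ i : ℤ, Finsupp.single i 1 ∈ p → Finsupp.single (i - 1) 1 ∈ p := by
    intro i hi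
    have := hpe _ hi
    rwa [eU_single] at this
  -- step up
  have hup : ∀ i : ℤ, Finsupp.single i 1 ∈ p → Finsupp.single (i + 1) 1 ∈ p := by
    intro i hi
    have hmem := hpf _ hi
    rw [fU_single, mul_one] at hmem
    set c : ℂ := -((r + (i : ℂ) + 1) * (r + (i : ℂ) - μ)) with hc
    have hc1 : r + (i : ℂ) + 1 ≠ 0 := by
      intro h0
      exact hr (-(i + 1)) (by push_cast; linear_combination h0)
    have hc2 : r + (i : ℂ) - μ ≠ 0 := by
      intro h0
      exact hrμ (-i) (by push_cast; linear_combination h0)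
    have hcne : c ≠ 0 := by
      rw [hc]; exact neg_ne_zero.mpr (mul_ne_zero hc1 hc2)
    have := p.smul_mem c⁻¹ hmem
    rwa [Finsupp.smul_single, smul_eq_mul, inv_mul_cancel₀ hcne] at this
  -- all singles are in p
  have hupn : ∀ d : ℕ, Finsupp.single (i₀ + d) 1 ∈ p := by
    intro d
    induction d with
    | zero => simpa using hi₀
    | succ k ihk =>
        have := hup (i₀ + k) ihk
        have heq : (i₀ + (k : ℤ)) + 1 = i₀ + ((k : ℕ) + 1 : ℕ) := by push_cast; ring
        rwa [heq] at this
  have hdownn : ∀ d : ℕ, Finsupp.single (i₀ - d) 1 ∈ p := by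
    intro d
    induction d with
    | zero => simpa using hi₀
    | succ k ihk =>
        have := hdown (i₀ - k) ihk
        have heq : (i₀ - (k : ℤ)) - 1 = i₀ - ((k : ℕ) + 1 : ℕ) := by push_cast; ring
        rwa [heq] at this
  have hall : ∀ i : ℤ, Finsupp.single i 1 ∈ p := by
    intro i
    rcases le_or_gt i₀ i with hle | hlt
    · have := hupn (i - i₀).toNat
      rwa [Int.toNat_of_nonneg (by omega), show i₀ + (i - i₀) = i by ring] at this
    · have hle : i ≤ i₀ := le_of_lt hlt
      have := hdownn (i₀ - i).toNat
      rwa [Int.toNat_of_nonneg (by omega), show i₀ - (i₀ - i) = i by ring] at this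
  -- conclude
  rw [Submodule.eq_top_iff']
  intro v
  induction v using Finsupp.induction_linear with
  | zero => exact p.zero_mem
  | add a b ha hb => exact p.add_mem ha hb
  | single i c =>
      have := p.smul_mem c (hall i)
      rwa [Finsupp.smul_single, smul_eq_mul, mul_one] at this
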